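/- Let P ∈ F_q[x] permute F_{q^k} and Q ∈ F_q[x] represent its compositional inverse on F_{q^k}. For any monic irreducible f of degree k over F_q, every irreducible factor of f(Q(x)) over F_q has degree divisible by k, and gcd(f(Q(x)), x^{q^k} − x) equals the minimal polynomial over F_q of P(α), where α is any root of f. -/

import Mathlib

open Polynomial

attribute [local instance] Classical.propDecidable

/-- every irreducible factor of `f(Q(x))` has degree divisible by `k`, and the
monic gcd of `f(Q(x))` and `x^{q^k} - x` is the minimal polynomial of `P(α)`. -/
theorem stmt_8 (F : Type*) [Field F] [Fintype F]
    (E : Type*) [Field E] [Algebra F E] [Fintype E]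
    (k : ℕ) (hk : 0 < k) (hE : Fintype.card E = Fintype.card F ^ k)
    (P Q : Polynomial F)
    (hperm : Function.Bijective (fun c : E => Polynomial.aeval c P))
    (hQ : ∀ c : E, Polynomial.aeval (Polynomial.aeval c P) Q = c)
    (f : Polynomial F) (hmonic : f.Monic) (hirr : Irreducible f) (hdeg : f.natDegree = k)
    (α : E) (hroot : Polynomial.aeval α f = 0)
    (g : Polynomial F)
    (hg : g = EuclideanDomain.gcd (f.comp Q)
      (Polynomial.X ^ Fintype.card F ^ k - Polynomial.X)) :
    (∀ r : Polynomial F, Irreducible r → r ∣ f.comp Q → k ∣ r.natDegree) ∧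
    Polynomial.C g.leadingCoeff⁻¹ * g = minpoly F (Polynomial.aeval α P) := by
  have hFE : FiniteDimensional F E := Module.Finite.of_finite
  -- Part 1
  have part1 : ∀ r : Polynomial F, Irreducible r → r ∣ f.comp Q → k ∣ r.natDegree := by
    intro r hr hdvd
    haveI : Fact (Irreducible r) := ⟨hr⟩
    have hrne : r ≠ 0 := hr.ne_zero
    haveI : FiniteDimensional F (AdjoinRoot r) :=
      Module.Finite.of_basis (AdjoinRoot.powerBasis hrne).basis
    have hfr : Module.finrank F (AdjoinRoot r) = r.natDegree := by
      rw [(AdjoinRoot.powerBasis hrne).finrank, AdjoinRoot.powerBasis_dim]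
    set β := AdjoinRoot.root r with hβ
    have hβ0 : aeval β r = 0 := by
      rw [hβ]; simp
    have hx0 : aeval (aeval β Q) f = 0 := by
      obtain ⟨s, hs⟩ := hdvd
      have h2 : aeval β (f.comp Q) = 0 := by
        rw [hs, map_mul, hβ0, zero_mul]
      rwa [aeval_comp] at h2
    have hxint : IsIntegral F (aeval β Q) := ⟨f, hmonic, hx0⟩
    have hmin : minpoly F (aeval β Q) = f :=
      (minpoly.eq_of_irreducible_of_monic hirr hx0 hmonic).symm
    have hd := minpoly.degree_dvd hxint
    rw [hmin, hdeg, hfr] at hd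
    exact hd
  refine ⟨part1, ?_⟩
  -- Notation
  set q := Fintype.card F with hq
  set T : Polynomial F := X ^ q ^ k - X with hT
  have hq1 : 1 < q := Fintype.one_lt_card
  have hTne : T ≠ 0 := FiniteField.X_pow_card_pow_sub_X_ne_zero F hk.ne' hq1
  -- separability / squarefreeness of T
  obtain ⟨p, hp⟩ := CharP.exists F
  haveI : CharP F p := hp
  obtain ⟨n, hpprime, hcard⟩ := FiniteField.card F p
  have hTsep : Separable T := by
    refine galois_poly_separable p (q ^ k) ?_
    have hpq : p ∣ q := by rw [hq, hcard]; exact dvd_pow_self p n.2.ne'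
    exact dvd_pow hpq hk.ne'
  have hTsq : Squarefree T := hTsep.squarefree
  -- minimal polynomial of P(α)
  set y : E := aeval α P with hy
  have hyint : IsIntegral F y := Algebra.IsIntegral.isIntegral y
  set m : Polynomial F := minpoly F y with hm
  have hQPα : aeval y Q = α := hQ α
  have hmdvd1 : m ∣ f.comp Q := by
    refine minpoly.dvd F y ?_
    rw [aeval_comp, hQPα, hroot]
  have hmdvd2 : m ∣ T := by
    refine minpoly.dvd F y ?_
    have hpow : (y : E) ^ Fintype.card E = y := FiniteField.pow_card y
    rw [hT]
    simp only [map_sub, map_pow, aeval_X]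
    rw [← hE, hpow, sub_self]
  have hmg : m ∣ g := by
    rw [hg]
    exact EuclideanDomain.dvd_gcd hmdvd1 hmdvd2
  have hgT : g ∣ T := hg ▸ EuclideanDomain.gcd_dvd_right _ _
  have hgcomp : g ∣ f.comp Q := hg ▸ EuclideanDomain.gcd_dvd_left _ _
  have hgne : g ≠ 0 := by
    rw [hg]
    intro h0
    exact hTne (EuclideanDomain.gcd_eq_zero_iff.mp h0).2
  have hgsq : Squarefree g := hTsq.squarefree_of_dvd hgT
  -- splitting of T over E
  have hTsplits : Splits (T.map (algebraMap F E)) := by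
    have hs := (FiniteField.isSplittingField_sub E F).splits'
    rw [hT]
    rwa [hE] at hs
  -- key: every monic irreducible factor of g is (a multiple of) m
  have key : ∀ r : Polynomial F, Irreducible r → r ∣ g → m ∣ r := by
    intro r hr hrg
    have hrT : r ∣ T := hrg.trans hgT
    have hrsplits : Splits (r.map (algebraMap F E)) :=
      hTsplits.of_dvd (Polynomial.map_ne_zero hTne) (Polynomial.map_dvd _ hrT)
    have hrdeg : r.degree ≠ 0 := (natDegree_pos_iff_degree_pos.mp hr.natDegree_pos).ne'
    obtain ⟨c, hc⟩ := hrsplits.exists_eval_eq_zero (by rwa [degree_map])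
    have hrc : aeval c r = 0 := by rw [aeval_def, ← eval_map]; exact hc
    -- c is a root of f.comp Q
    have hfQc : aeval (aeval c Q) f = 0 := by
      obtain ⟨s, hs⟩ := hrg.trans hgcomp
      have h2 : aeval c (f.comp Q) = 0 := by rw [hs, map_mul, hrc, zero_mul]
      rwa [aeval_comp] at h2
    -- c = P (Q c)
    obtain ⟨a, ha⟩ := hperm.2 c
    have haQ : aeval c Q = a := by rw [← ha]; exact hQ a
    have hcP : aeval (aeval c Q) P = c := by rw [haQ]; exact ha
    -- conjugation
    have hminα : minpoly F α = f := (minpoly.eq_of_irreducible_of_monic hirr hroot hmonic).symm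
    have halg : IsAlgebraic F α := (Algebra.IsIntegral.isIntegral α).isAlgebraic
    obtain ⟨σ, hσ⟩ := minpoly.exists_algEquiv_of_root halg (by rw [hminα]; exact hfQc)
    have hσc : σ c = y := by
      rw [← hcP, ← aeval_algHom_apply σ (aeval c Q) P, hσ]
    have hmceq : minpoly F c = m := by rw [hm, ← hσc, minpoly.algEquiv_eq]
    have hmc : minpoly F c ∣ r := minpoly.dvd F c hrc
    rwa [hmceq] at hmc
  -- conclusion
  obtain ⟨e, he⟩ := hmg
  have hmirr : Irreducible m := minpoly.irreducible hyint
  have hmmonic : m.Monic := minpoly.monic hyint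
  have hene : e ≠ 0 := by
    rintro rfl
    rw [mul_zero] at he
    exact hgne he
  have heu : IsUnit e := by
    by_contra hnu
    obtain ⟨r, hrirr, hre⟩ := WfDvdMonoid.exists_irreducible_factor hnu hene
    have hrg : r ∣ g := he ▸ (hre.mul_left m)
    have hmr : m ∣ r := key r hrirr hrg
    have hmm : m * m ∣ g := by
      rw [he]; exact mul_dvd_mul_left m (hmr.trans hre)
    exact hmirr.not_isUnit (hgsq m hmm)
  obtain ⟨u, huu, hCu⟩ := Polynomial.isUnit_iff.mp heu
  have hune : u ≠ 0 := huu.ne_zero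
  have hlc : g.leadingCoeff = u := by
    rw [he, ← hCu, leadingCoeff_mul, hmmonic.leadingCoeff, one_mul, leadingCoeff_C]
  rw [hlc, he, ← hCu]
  calc C u⁻¹ * (m * C u) = m * (C u⁻¹ * C u) := by ring
    _ = m := by rw [← C_mul, inv_mul_cancel₀ hune, C_1, mul_one]
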